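/- Let k be a field of characteristic p > 0 that is infinite. Let S₀ be a finite subset of k, and let S = {s^(p^n) : s ∈ S₀, n ∈ ℕ}. Then k \ S is infinite. -/
import Mathlib

private lemma orbit_finite_of_repeat {k : Type*} [Field k] {p : ℕ} (s : k) {a b : ℕ}
    (hab : a < b) (h : s ^ p ^ a = s ^ p ^ b) :
    (Set.range fun n => s ^ p ^ n).Finite := by
  have key : ∀ n, ∃ m < b, s ^ p ^ n = s ^ p ^ m := by
    intro n
    induction n using Nat.strong_induction_on with
    | _ n ih =>
      rcases lt_or_ge n b with h1 | h1
      · exact ⟨n, h1, rfl⟩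
      · have h2 : n - (b - a) < n := by omega
        obtain ⟨m, hm, hm2⟩ := ih _ h2
        refine ⟨m, hm, ?_⟩
        have e : s ^ p ^ n = s ^ p ^ (n - (b - a)) := by
          have e1 : n = b + (n - b) := by omega
          have e2 : n - (b - a) = a + (n - b) := by omega
          conv_lhs => rw [e1]
          conv_rhs => rw [e2]
          rw [pow_add, pow_add, pow_mul, pow_mul, h]
        rw [e, hm2]
  apply ((Set.finite_Iio b).image (fun m => s ^ p ^ m)).subset
  rintro x ⟨n, rfl⟩
  obtain ⟨m, hm, hm2⟩ := key n
  exact ⟨m, hm, hm2.symm⟩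

private lemma orbit_inj {k : Type*} [Field k] {p : ℕ} {s : k}
    (h : ¬ (Set.range fun n => s ^ p ^ n).Finite) :
    Function.Injective (fun n : ℕ => s ^ p ^ n) := by
  intro a b hab
  by_contra hne
  rcases lt_or_gt_of_ne hne with h1 | h1
  · exact h (orbit_finite_of_repeat s h1 hab)
  · exact h (orbit_finite_of_repeat s h1 hab.symm)

/-- Let `k` be an infinite field of characteristic `p > 0`, `S₀` a finite subset of `k`,
and `S = {s^(p^n) : s ∈ S₀, n ∈ ℕ}`. Then `k \ S` is infinite. -/
theorem stmt_0 {k : Type*} [Field k] [Infinite k] (p : ℕ) (hp : p.Prime) [CharP k p]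
    (S₀ : Finset k) (S : Set k) (hS : S = {x : k | ∃ s ∈ S₀, ∃ n : ℕ, x = s ^ p ^ n}) :
    (Sᶜ).Infinite := by
  haveI : Fact p.Prime := ⟨hp⟩
  classical
  by_contra hcon
  rw [Set.not_infinite] at hcon
  have hSinf : S.Infinite := by
    have := hcon.infinite_compl
    rwa [compl_compl] at this
  by_cases hperf : ∀ x : k, ∃ y : k, y ^ p = x
  · -- perfect case
    choose g hg using hperf
    have hex_s : ∃ s ∈ S₀, ¬ (Set.range fun n => s ^ p ^ n).Finite := by
      by_contra hall
      push_neg at hall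
      apply hSinf
      have hsub : S ⊆ ⋃ s ∈ S₀, Set.range fun n => s ^ p ^ n := by
        rw [hS]
        rintro x ⟨t, ht, n, rfl⟩
        exact Set.mem_biUnion ht ⟨n, rfl⟩
      exact (Set.Finite.biUnion S₀.finite_toSet (fun t ht => hall t ht)).subset hsub
    obtain ⟨s, hs, hsinf⟩ := hex_s
    set seq : ℕ → k := fun n => g^[n] s with hseq
    have hseq_pow : ∀ n, (seq n) ^ p ^ n = s := by
      intro n
      induction n with
      | zero => simp [hseq]
      | succ n ih =>
        have h1 : seq (n+1) = g (seq n) := Function.iterate_succ_apply' g n s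
        rw [h1, pow_succ', pow_mul, hg, ih]
    have horb : ∀ (x : k) (m : ℕ), x ^ p ^ m = s →
        (Set.range fun n => s ^ p ^ n) ⊆ Set.range fun n => x ^ p ^ n := by
      intro x m hx
      rintro _ ⟨n, rfl⟩
      exact ⟨m + n, by show x ^ p ^ (m + n) = s ^ p ^ n; rw [pow_add, pow_mul, hx]⟩
    have hinfx : ∀ (x : k) (m : ℕ), x ^ p ^ m = s →
        ¬ (Set.range fun n => x ^ p ^ n).Finite :=
      fun x m hx hf => hsinf (hf.subset (horb x m hx))
    have key : ∀ a b : ℕ, a < b → seq a ≠ seq b := by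
      intro a b hab heq
      have h0 : seq b ^ p ^ a = s := heq ▸ hseq_pow a
      have h1 : (seq b) ^ p ^ a = (seq b) ^ p ^ b := h0.trans (hseq_pow b).symm
      exact hinfx (seq b) b (hseq_pow b) (orbit_finite_of_repeat _ hab h1)
    have hseqinj : Function.Injective seq := by
      intro a b h
      rcases lt_trichotomy a b with h1 | h1 | h1
      · exact absurd h (key a b h1)
      · exact h1
      · exact absurd h.symm (key b a h1)
    set E : ℕ := S₀.sup (fun t => if h : ∃ e : ℕ, t ^ p ^ e = s then h.choose else 0) with hE
    have hnot : ∀ N, E < N → seq N ∉ S := by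
      intro N hN hmem
      rw [hS] at hmem
      obtain ⟨t, ht, r, hr⟩ := hmem
      have hts : t ^ p ^ (r + N) = s := by
        rw [pow_add, pow_mul, ← hr, hseq_pow]
      have hex : ∃ e : ℕ, t ^ p ^ e = s := ⟨r + N, hts⟩
      have hinj_t := orbit_inj (hinfx t (r + N) hts)
      have hchoose : t ^ p ^ hex.choose = s := hex.choose_spec
      have heq : hex.choose = r + N := hinj_t (by simp only []; rw [hchoose, hts])
      have hle := Finset.le_sup (f := fun t => if h : ∃ e : ℕ, t ^ p ^ e = s then h.choose else 0) ht
      rw [← hE] at hle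
      simp only [dif_pos hex] at hle
      omega
    have hinf2 : (Sᶜ : Set k).Infinite := by
      apply Set.infinite_of_injective_forall_mem (f := fun n : ℕ => seq (n + E + 1))
      · intro a b h
        have := hseqinj h
        omega
      · intro n
        exact hnot (n + E + 1) (by omega)
    exact hinf2 hcon
  · -- imperfect case
    push_neg at hperf
    obtain ⟨a, ha⟩ := hperf
    have hinj : Function.Injective (fun x : k => a + x ^ p) := by
      intro x y hxy
      simp only [add_right_inj] at hxy
      apply frobenius_inj k p
      simpa [frobenius_def] using hxy
    have hmem : ∀ x : k, a + x ^ p ∈ Sᶜ ∪ ↑S₀ := by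
      intro x
      by_cases hx : a + x ^ p ∈ S
      · rw [hS] at hx
        obtain ⟨t, ht, r, hr⟩ := hx
        rcases Nat.eq_zero_or_pos r with h0 | h0
        · right
          simp only [h0, pow_zero, pow_one] at hr
          rw [hr]
          exact ht
        · exfalso
          obtain ⟨m, rfl⟩ : ∃ m, r = m + 1 := ⟨r - 1, by omega⟩
          apply ha (t ^ p ^ m - x)
          have h1 : t ^ p ^ (m + 1) = (t ^ p ^ m) ^ p := by
            rw [pow_succ, pow_mul]
          rw [sub_pow_char, ← h1, ← hr]
          ring
      · left
        exact hx
    have hinf2 : ((Sᶜ : Set k) ∪ ↑S₀).Infinite :=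
      Set.infinite_of_injective_forall_mem hinj hmem
    exact hinf2 (hcon.union S₀.finite_toSet)
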